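/- Let α, β ∈ ℝ with 0 < α ≤ β ≤ 2α. Then for all z ∈ (0,1), α(1 - z^{α+1} + z^{β+1-α} - z^{β+2}) + (β+1-α)(-z + z^{β+1-α} - z^{α+1} + z^{β+1}) > 0. -/

import Mathlib

/-- Strict AM-GM: for `x ∈ (0,1)` and `m > 0`, `(m+1) x^m < 1 + m x^(m+1)`. -/
lemma amgm_strict (x m : ℝ) (hx0 : 0 < x) (hx1 : x < 1) (hm : 0 < m) :
    (m+1) * x ^ m < 1 + m * x ^ (m+1) := by
  have hlog : Real.log x < 0 := Real.log_neg hx0 hx1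
  have hne : (0:ℝ) ≠ (m+1) * Real.log x := by
    have : (m+1) * Real.log x < 0 := mul_neg_of_pos_of_neg (by linarith) hlog
    linarith
  have hw1 : (0:ℝ) < 1/(m+1) := by positivity
  have hw2 : (0:ℝ) < m/(m+1) := by positivity
  have hsum : 1/(m+1) + m/(m+1) = 1 := by field_simp; ring
  have h := strictConvexOn_exp.2 (Set.mem_univ (0:ℝ))
      (Set.mem_univ ((m+1) * Real.log x)) hne hw1 hw2 hsum
  simp only [smul_eq_mul, mul_zero, zero_add, Real.exp_zero, mul_one] at h
  have e1 : (m/(m+1)) * ((m+1) * Real.log x) = m * Real.log x := by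
    field_simp
  rw [e1] at h
  have e2 : Real.exp (m * Real.log x) = x ^ m := by
    rw [Real.rpow_def_of_pos hx0, mul_comm]
  have e3 : Real.exp ((m+1) * Real.log x) = x ^ (m+1) := by
    rw [Real.rpow_def_of_pos hx0, mul_comm]
  rw [e2, e3] at h
  have hm1 : (0:ℝ) < m + 1 := by linarith
  calc (m+1) * x ^ m < (m+1) * (1/(m+1) + m/(m+1) * x ^ (m+1)) :=
        mul_lt_mul_of_pos_left h hm1
    _ = 1 + m * x ^ (m+1) := by field_simp

/-- The binding case: `α (1 - z^(2α+2)) - (α+1)(z - z^(2α+1)) > 0`. -/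
lemma claimA (α z : ℝ) (hα : 0 < α) (hz0 : 0 < z) (hz1 : z < 1) :
    0 < α - (α+1)*z + (α+1)*z^(2*α+1) - α*z^(2*α+2) := by
  set f : ℝ → ℝ := fun x => α - (α+1)*x + (α+1)*x^(2*α+1) - α*x^(2*α+2) with hf
  have hder : ∀ x : ℝ, 0 < x →
      HasDerivAt f (0 - (α+1)*1 + (α+1)*((2*α+1)*x^(2*α)) - α*((2*α+2)*x^(2*α+1))) x := by
    intro x hx
    have h1 := Real.hasDerivAt_rpow_const (x := x) (p := 2*α+1) (Or.inl hx.ne')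
    have h2 := Real.hasDerivAt_rpow_const (x := x) (p := 2*α+2) (Or.inl hx.ne')
    rw [show 2*α+1-1 = 2*α by ring] at h1
    rw [show 2*α+2-1 = 2*α+1 by ring] at h2
    exact (((hasDerivAt_const x α).sub ((hasDerivAt_id x).const_mul (α+1))).add
      (h1.const_mul (α+1))).sub (h2.const_mul α)
  have hanti : StrictAntiOn f (Set.Icc z 1) := by
    apply strictAntiOn_of_deriv_neg (convex_Icc z 1)
    · intro x hx
      have hx0 : 0 < x := lt_of_lt_of_le hz0 hx.1
      exact (hder x hx0).continuousAt.continuousWithinAt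
    · intro x hx
      rw [interior_Icc] at hx
      have hx0 : 0 < x := lt_trans hz0 hx.1
      rw [(hder x hx0).deriv]
      have hamgm := amgm_strict x (2*α) hx0 hx.2 (by linarith)
      nlinarith [hamgm, hα]
  have hf1 : f 1 = 0 := by
    simp only [hf, Real.one_rpow]; ring
  have := hanti (Set.mem_Icc.mpr ⟨le_refl z, hz1.le⟩)
      (Set.mem_Icc.mpr ⟨hz1.le, le_refl 1⟩) hz1
  rw [hf1] at this
  exact this

theorem stmt0 (α β : ℝ) (hα : 0 < α) (hαβ : α ≤ β) (hβ : β ≤ 2*α) :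
    ∀ z ∈ Set.Ioo (0:ℝ) 1,
      0 < α * (1 - z^(α+1) + z^(β+1-α) - z^(β+2)) +
          (β+1-α) * (-z + z^(β+1-α) - z^(α+1) + z^(β+1)) := by
  rintro z ⟨hz0, hz1⟩
  set a := z ^ α with ha
  set b := z ^ (β - α) with hb
  have ha0 : 0 < a := Real.rpow_pos_of_pos hz0 α
  have hb0 : 0 < b := Real.rpow_pos_of_pos hz0 (β - α)
  have ha1 : a < 1 := Real.rpow_lt_one hz0.le hz1 hα
  have hb1 : b ≤ 1 := Real.rpow_le_one hz0.le hz1.le (by linarith)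
  have hab : a ≤ b := Real.rpow_le_rpow_of_exponent_ge hz0 hz1.le (by linarith)
  have e1 : z ^ (α+1) = a * z := by
    rw [ha, Real.rpow_add hz0, Real.rpow_one]
  have e2 : z ^ (β+1-α) = b * z := by
    rw [show β+1-α = (β-α)+1 by ring, Real.rpow_add hz0, Real.rpow_one]
  have e3 : z ^ (β+1) = a * b * z := by
    rw [show β+1 = α+((β-α)+1) by ring, Real.rpow_add hz0, Real.rpow_add hz0,
      Real.rpow_one, ha, hb]; ring
  have e4 : z ^ (β+2) = a * b * (z*z) := by
    rw [show β+2 = α+((β-α)+(1+1)) by ring, Real.rpow_add hz0, Real.rpow_add hz0,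
      Real.rpow_add hz0, Real.rpow_one, ha, hb]; ring
  rw [e1, e2, e3, e4]
  have hA := claimA α z hα hz0 hz1
  have eA1 : z ^ (2*α+1) = a * a * z := by
    rw [show 2*α+1 = α+(α+1) by ring, Real.rpow_add hz0, Real.rpow_add hz0,
      Real.rpow_one, ha]; ring
  have eA2 : z ^ (2*α+2) = a * a * (z*z) := by
    rw [show 2*α+2 = α+(α+(1+1)) by ring, Real.rpow_add hz0, Real.rpow_add hz0,
      Real.rpow_add hz0, Real.rpow_one, ha]; ring
  rw [eA1, eA2] at hA
  have haz : a * z < 1 := by nlinarith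
  have h1 : 0 ≤ α * (1 - a*z) * (b*z - a*z) := by
    apply mul_nonneg (mul_nonneg hα.le (by nlinarith))
    nlinarith
  have h2 : 0 ≤ z * (1+a) * ((2*α-β)*(1-a) + (β+1-α)*(b-a)) := by
    apply mul_nonneg (mul_nonneg hz0.le (by linarith))
    have t1 : 0 ≤ (2*α-β)*(1-a) := mul_nonneg (by linarith) (by linarith)
    have t2 : 0 ≤ (β+1-α)*(b-a) := mul_nonneg (by linarith) (by linarith)
    linarith
  nlinarith [hA, h1, h2]
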